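/- arXiv:2403.09152 — 2 statements merged into one kernel-verified Lean document; each statement's English description precedes it below -/
import Mathlib

section
/- Given totally skew-symmetric constants T_{ijk}, skew-symmetric constants g⁰_{ij} and A_{ij}, constants B_i, suppose g_{ij}(u) = T_{ijk}u^k + g⁰_{ij} is invertible at u, and define V^i = g^{is}(A_{sl}u^l + B_s) where g^{is} is the inverse matrix of g_{ij}. Then the algebraic condition g_{qj}(∂V^j/∂u^p) + g_{pj}(∂V^j/∂u^q) = 0 holds for all p, q at every point where g is invertible. -/
open scoped BigOperators

noncomputable def Lco {N : ℕ} (c : Fin N → ℝ) : (Fin N → ℝ) →L[ℝ] ℝ :=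
  ∑ k, c k • ContinuousLinearMap.proj k

lemma Lco_apply {N : ℕ} (c v : Fin N → ℝ) : Lco c v = ∑ k, c k * v k := by
  simp [Lco]

lemma Lco_single {N : ℕ} (c : Fin N → ℝ) (p : Fin N) : Lco c (Pi.single p 1) = c p := by
  rw [Lco_apply]
  simp [Pi.single_apply, mul_ite]

lemma hasFDeriv_affine {N : ℕ} (c : Fin N → ℝ) (b : ℝ) (u : Fin N → ℝ) :
    HasFDerivAt (fun v : Fin N → ℝ => (∑ k, c k * v k) + b) (Lco c) u := by
  have h := ((Lco c).hasFDerivAt (x := u)).add_const b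
  have : (fun v : Fin N → ℝ => Lco c v + b) = fun v => (∑ k, c k * v k) + b := by
    funext v; rw [Lco_apply]
  rwa [this] at h

lemma diff_det {N : ℕ} (M : (Fin N → ℝ) → Matrix (Fin N) (Fin N) ℝ) (u : Fin N → ℝ)
    (h : ∀ i j, DifferentiableAt ℝ (fun v => M v i j) u) :
    DifferentiableAt ℝ (fun v => (M v).det) u := by
  simp only [Matrix.det_apply']
  refine DifferentiableAt.fun_sum fun σ _ => DifferentiableAt.const_mul ?_ _
  exact (HasFDerivAt.finset_prod fun i (_ : i ∈ Finset.univ) =>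
    (h (σ i) i).hasFDerivAt).differentiableAt

/-- The flux `V^i = g^{is}(A_{sl}u^l + B_s)` satisfies the algebraic compatibility
condition `g_{qj} ∂V^j/∂u^p + g_{pj} ∂V^j/∂u^q = 0` wherever `g` is invertible. -/
theorem stmt_5 (N : ℕ)
    (T : Fin N → Fin N → Fin N → ℝ)
    (hT1 : ∀ i j k, T i j k = -T j i k)
    (hT2 : ∀ i j k, T i j k = -T i k j)
    (g0 A : Matrix (Fin N) (Fin N) ℝ)
    (hg0 : ∀ i j, g0 i j = -g0 j i) (hA : ∀ i j, A i j = -A j i)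
    (B : Fin N → ℝ)
    (g : (Fin N → ℝ) → Matrix (Fin N) (Fin N) ℝ)
    (hg : ∀ u i j, g u i j = (∑ k, T i j k * u k) + g0 i j)
    (V : (Fin N → ℝ) → Fin N → ℝ)
    (hV : ∀ u, V u = (g u)⁻¹.mulVec (fun s => (∑ l, A s l * u l) + B s))
    (u : Fin N → ℝ) (hu : IsUnit (g u).det) :
    ∀ p q : Fin N,
      (∑ j, g u q j * fderiv ℝ (fun v => V v j) u (Pi.single p 1)) +
      (∑ j, g u p j * fderiv ℝ (fun v => V v j) u (Pi.single q 1)) = 0 := by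
  -- entries of g are differentiable
  have hentry : ∀ (w : Fin N → ℝ) i j, DifferentiableAt ℝ (fun v => g v i j) w := by
    intro w i j
    have : (fun v => g v i j) = fun v => (∑ k, T i j k * v k) + g0 i j := by
      funext v; exact hg v i j
    rw [this]
    exact (hasFDeriv_affine _ _ w).differentiableAt
  have hdet : DifferentiableAt ℝ (fun v => (g v).det) u := diff_det _ _ (hentry u)
  -- adjugate entries differentiable
  have hadj : ∀ i j, DifferentiableAt ℝ (fun v => (g v).adjugate i j) u := by
    intro i j
    simp only [Matrix.adjugate_apply]
    refine diff_det _ _ ?_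
    intro a b
    by_cases hb : a = j
    · subst hb
      simp only [Matrix.updateRow_self]
      exact differentiableAt_const _
    · simp only [Matrix.updateRow_ne hb]
      exact hentry u a b
  -- F differentiable
  have hF : ∀ s, DifferentiableAt ℝ (fun v => (∑ l, A s l * v l) + B s) u :=
    fun s => (hasFDeriv_affine _ _ u).differentiableAt
  have hdet0 : (g u).det ≠ 0 := hu.ne_zero
  -- V is differentiable at u
  have hVdiff : ∀ j, DifferentiableAt ℝ (fun v => V v j) u := by
    intro j
    have hVeq : (fun v => V v j) = fun v =>
        Ring.inverse (g v).det *
          ((g v).adjugate.mulVec (fun s => (∑ l, A s l * v l) + B s)) j := by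
      funext v
      rw [hV, Matrix.inv_def, Matrix.smul_mulVec, Pi.smul_apply, smul_eq_mul]
    rw [hVeq]
    simp only [Ring.inverse_eq_inv, Matrix.mulVec, dotProduct]
    exact (hdet.inv hdet0).mul
      (DifferentiableAt.fun_sum fun s _ => (hadj j s).mul (hF s))
  -- key identity near u
  have hev : ∀ᶠ v in nhds u, IsUnit (g v).det := by
    have : ContinuousAt (fun v => (g v).det) u := hdet.continuousAt
    filter_upwards [this.eventually_ne hdet0] with v hv
    exact isUnit_iff_ne_zero.mpr hv
  -- the main derivative identity
  have main : ∀ p q : Fin N,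
      (∑ j, (g u q j * fderiv ℝ (fun v => V v j) u (Pi.single p 1)
        + V u j * T q j p)) = A q p := by
    intro p q
    -- LHS function eventually equals RHS function
    have heq : (fun v => ∑ j, g v q j * V v j) =ᶠ[nhds u]
        (fun v => (∑ l, A q l * v l) + B q) := by
      filter_upwards [hev] with v hv
      have h1 : (g v).mulVec (V v) = fun s => (∑ l, A s l * v l) + B s := by
        rw [hV, Matrix.mulVec_mulVec, Matrix.mul_nonsing_inv _ hv, Matrix.one_mulVec]
      have h2 := congrFun h1 q
      simpa [Matrix.mulVec, dotProduct] using h2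
    have hgj : ∀ j, HasFDerivAt (fun v => g v q j) (Lco (fun k => T q j k)) u := by
      intro j
      have : (fun v => g v q j) = fun v => (∑ k, T q j k * v k) + g0 q j := by
        funext v; exact hg v q j
      rw [this]; exact hasFDeriv_affine _ _ u
    have hL : HasFDerivAt (fun v => ∑ j, g v q j * V v j)
        (∑ j, (g u q j • fderiv ℝ (fun v => V v j) u
          + V u j • Lco (fun k => T q j k))) u :=
      HasFDerivAt.fun_sum fun j _ => (hgj j).mul (hVdiff j).hasFDerivAt
    have hR : HasFDerivAt (fun v => (∑ l, A q l * v l) + B q) (Lco (fun l => A q l)) u :=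
      hasFDeriv_affine _ _ u
    have hfd : (∑ j, (g u q j • fderiv ℝ (fun v => V v j) u
          + V u j • Lco (fun k => T q j k))) = Lco (fun l => A q l) := by
      rw [← hL.fderiv, ← hR.fderiv]
      exact heq.fderiv_eq
    have := congrArg (fun (L : (Fin N → ℝ) →L[ℝ] ℝ) => L (Pi.single p 1)) hfd
    simpa [ContinuousLinearMap.sum_apply, Lco_single] using this
  intro p q
  have h1 := main p q
  have h2 := main q p
  rw [Finset.sum_add_distrib] at h1 h2
  have hTs : ∑ j, V u j * T p j q = -∑ j, V u j * T q j p := by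
    rw [← Finset.sum_neg_distrib]
    refine Finset.sum_congr rfl fun j _ => ?_
    have : T p j q = -T q j p := by
      rw [hT1 p j q, hT2 j p q, hT1 j q p]; ring
    rw [this]; ring
  have hAs : A p q = -A q p := hA p q
  linarith
end

section
/- Under the exchange of dependent variables ū^i = V^i(u), the transformed metric ḡ_{ij} := g_{is} ∂V^s/∂u^j equals T_{ijk}V^k + A_{ij}, i.e. ḡ has again the canonical form 'totally skew-symmetric constant three-tensor contracted with ū plus a constant skew-symmetric matrix' with T̄ = T and ḡ⁰ = A. -/
open Matrix

lemma det_diffAt {N : ℕ} {M : (Fin N → ℝ) → Matrix (Fin N) (Fin N) ℝ} {u : Fin N → ℝ}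
    (h : ∀ i j, DifferentiableAt ℝ (fun v => M v i j) u) :
    DifferentiableAt ℝ (fun v => (M v).det) u := by
  simp only [Matrix.det_apply']
  apply DifferentiableAt.fun_sum
  intro σ _
  have hp : DifferentiableAt ℝ (fun v => ∏ i, M v (σ i) i) u :=
    (HasFDerivAt.finset_prod (g := fun i v => M v (σ i) i)
      (fun i _ => (h (σ i) i).hasFDerivAt)).differentiableAt
  exact hp.const_mul _

lemma lin_hasFDerivAt {N : ℕ} (c : Fin N → ℝ) (b : ℝ) (u : Fin N → ℝ) :
    HasFDerivAt (fun v : Fin N → ℝ => (∑ k, c k * v k) + b)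
      (∑ k, c k • (ContinuousLinearMap.proj k : (Fin N → ℝ) →L[ℝ] ℝ)) u := by
  exact (HasFDerivAt.fun_sum fun k _ =>
    ((ContinuousLinearMap.proj k : (Fin N → ℝ) →L[ℝ] ℝ).hasFDerivAt.const_mul (c k))).add_const b

/-- Under the exchange `ū^i = V^i(u)`, the transformed metric
`ḡ_{ij} = g_{is} ∂V^s/∂u^j` equals `T_{ijk} V^k + A_{ij}`. -/
theorem stmt_7 (N : ℕ)
    (T : Fin N → Fin N → Fin N → ℝ)
    (hT1 : ∀ i j k, T i j k = -T j i k)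
    (hT2 : ∀ i j k, T i j k = -T i k j)
    (g0 A : Matrix (Fin N) (Fin N) ℝ)
    (hg0 : ∀ i j, g0 i j = -g0 j i) (hA : ∀ i j, A i j = -A j i)
    (B : Fin N → ℝ)
    (g : (Fin N → ℝ) → Matrix (Fin N) (Fin N) ℝ)
    (hg : ∀ u i j, g u i j = (∑ k, T i j k * u k) + g0 i j)
    (V : (Fin N → ℝ) → Fin N → ℝ)
    (hV : ∀ u, V u = (g u)⁻¹.mulVec (fun s => (∑ l, A s l * u l) + B s))
    (u : Fin N → ℝ) (hu : IsUnit (g u).det) :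
    ∀ i j, (∑ s, g u i s * fderiv ℝ (fun v => V v s) u (Pi.single j 1))
        = (∑ k, T i j k * V u k) + A i j := by
  classical
  -- differentiability of entries of g
  have hgd : ∀ i j, DifferentiableAt ℝ (fun v => g v i j) u := by
    intro i j
    have := (lin_hasFDerivAt (T i j) (g0 i j) u).differentiableAt
    simpa only [← hg] using this
  have hdet : DifferentiableAt ℝ (fun v => (g v).det) u := det_diffAt hgd
  have hdet0 : (g u).det ≠ 0 := hu.ne_zero
  have hadj : ∀ s k, DifferentiableAt ℝ (fun v => (g v).adjugate s k) u := by
    intro s k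
    simp only [Matrix.adjugate_apply]
    apply det_diffAt
    intro a b
    rcases eq_or_ne a k with hak | hak
    · simp only [hak, Matrix.updateRow_apply, if_pos rfl]
      exact differentiableAt_const _
    · simp only [Matrix.updateRow_apply, if_neg hak]
      exact hgd a b
  -- differentiability of V
  have hVfun : ∀ s, (fun v => V v s)
      = fun v => ∑ k, ((g v).det⁻¹ * (g v).adjugate s k) * ((∑ l, A k l * v l) + B k) := by
    intro s
    funext v
    rw [hV v]
    simp [Matrix.mulVec, dotProduct, Matrix.inv_def, Ring.inverse_eq_inv',
      Matrix.smul_apply, smul_eq_mul]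
  have hVd : ∀ s, DifferentiableAt ℝ (fun v => V v s) u := by
    intro s
    rw [hVfun s]
    apply DifferentiableAt.fun_sum
    intro k _
    exact ((hdet.inv hdet0).mul (hadj s k)).mul
      (lin_hasFDerivAt (A k) (B k) u).differentiableAt
  intro i j
  set D : Fin N → ℝ := fun s => fderiv ℝ (fun v => V v s) u (Pi.single j 1) with hD
  -- derivative of g entries
  have hgF : ∀ s, HasFDerivAt (fun v => g v i s)
      (∑ k, T i s k • (ContinuousLinearMap.proj k : (Fin N → ℝ) →L[ℝ] ℝ)) u := by
    intro s
    have := lin_hasFDerivAt (T i s) (g0 i s) u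
    simpa only [← hg] using this
  -- LHS derivative
  have hL : HasFDerivAt (fun v => ∑ s, g v i s * V v s)
      (∑ s, (g u i s • fderiv ℝ (fun v => V v s) u +
        V u s • ∑ k, T i s k • (ContinuousLinearMap.proj k : (Fin N → ℝ) →L[ℝ] ℝ))) u := by
    apply HasFDerivAt.fun_sum
    intro s _
    exact (hgF s).mul (hVd s).hasFDerivAt
  -- eventual equality with the linear RHS
  have hev : (fun v => ∑ s, g v i s * V v s) =ᶠ[nhds u]
      fun v => (∑ l, A i l * v l) + B i := by
    have hne : ∀ᶠ v in nhds u, (g v).det ≠ 0 := hdet.continuousAt.eventually_ne hdet0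
    filter_upwards [hne] with v hv
    have hunit : IsUnit (g v).det := isUnit_iff_ne_zero.2 hv
    have : (g v).mulVec (V v) = fun s => (∑ l, A s l * v l) + B s := by
      rw [hV v, Matrix.mulVec_mulVec, Matrix.mul_nonsing_inv _ hunit, Matrix.one_mulVec]
    calc ∑ s, g v i s * V v s = (g v).mulVec (V v) i := by
          simp [Matrix.mulVec, dotProduct]
      _ = (∑ l, A i l * v l) + B i := by rw [this]
  have hR : HasFDerivAt (fun v => (∑ l, A i l * v l) + B i)
      (∑ l, A i l • (ContinuousLinearMap.proj l : (Fin N → ℝ) →L[ℝ] ℝ)) u :=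
    lin_hasFDerivAt (A i) (B i) u
  have hL' := hL.congr_of_eventuallyEq hev.symm
  have huniq := hL'.unique hR
  have key := congrArg (fun L : (Fin N → ℝ) →L[ℝ] ℝ => L (Pi.single j 1)) huniq
  simp only [ContinuousLinearMap.sum_apply, ContinuousLinearMap.add_apply,
    ContinuousLinearMap.smul_apply, ContinuousLinearMap.proj_apply, smul_eq_mul,
    Pi.single_apply, mul_ite, mul_one, mul_zero, Finset.sum_ite_eq',
    Finset.mem_univ, if_pos] at key
  -- key : ∑ s, (g u i s * D s + V u s * T i s j) = A i j
  have h1 : ∑ s, g u i s * D s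
      = A i j - ∑ s, V u s * T i s j := by
    rw [← key, Finset.sum_add_distrib]
    ring
  rw [h1]
  have h2 : ∑ s, V u s * T i s j = -∑ s, T i j s * V u s := by
    rw [← Finset.sum_neg_distrib]
    apply Finset.sum_congr rfl
    intro s _
    rw [hT2 i j s]
    ring
  rw [h2]
  ring
end
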